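/- arXiv:2001.06622 — 3 statements merged into one kernel-verified Lean document; each statement's English description precedes it below -/
import Mathlib

section
/- Let L be a finite-dimensional Lie algebra over a field K of characteristic 0 such that every derivation of L is inner (i.e., for every derivation D of L there exists z ∈ L with D = ad_z). If the center of L is nontrivial, then L is not solvable. -/
/-- If every derivation of a finite-dimensional Lie algebra `L` over a field of
characteristic zero is inner and the center of `L` is nontrivial, then `L` is not solvable. -/
theorem stmt_0 {K L : Type*} [Field K] [CharZero K] [LieRing L] [LieAlgebra K L]
    [Module.Finite K L]
    (hinner : ∀ D : LieDerivation K L L, ∃ z : L, D = LieDerivation.ad K L z)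
    (hcenter : LieAlgebra.center K L ≠ ⊥) :
    ¬ LieAlgebra.IsSolvable L := by
  intro hsol
  -- a nonzero central element
  have : Nontrivial (LieAlgebra.center K L) :=
    (LieSubmodule.nontrivial_iff_ne_bot K L L).mpr hcenter
  obtain ⟨zz, hzz⟩ := exists_ne (0 : LieAlgebra.center K L)
  set z : L := (zz : L) with hzdef
  have hz0 : z ≠ 0 := fun h => hzz (Subtype.ext h)
  have hzc : ∀ a : L, ⁅a, z⁆ = 0 :=
    (LieModule.mem_maxTrivSubmodule K L L z).mp zz.2
  have : Nontrivial L := ⟨z, 0, hz0⟩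
  -- the derived ideal is proper; get a functional vanishing on it
  have hlt : LieAlgebra.derivedSeries K L 1 < ⊤ :=
    by haveI := hsol; exact LieAlgebra.derivedSeries_lt_top_of_solvable K L
  set p : Submodule K L := (LieAlgebra.derivedSeries K L 1).toSubmodule with hpdef
  have hplt : p < ⊤ :=
    lt_top_iff_ne_top.mpr fun h =>
      lt_top_iff_ne_top.mp hlt ((LieSubmodule.toSubmodule_eq_top _).mp h)
  obtain ⟨f, hf0, hfmap⟩ := p.exists_dual_map_eq_bot_of_lt_top hplt inferInstance
  have hker : ∀ y ∈ p, f y = 0 := by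
    intro y hy
    have : f y ∈ p.map f := Submodule.mem_map_of_mem hy
    rw [hfmap] at this
    simpa using this
  have h1 : LieAlgebra.derivedSeries K L 1 = ⁅(⊤ : LieIdeal K L), (⊤ : LieIdeal K L)⁆ := by
    have := LieAlgebra.derivedSeriesOfIdeal_succ K L (⊤ : LieIdeal K L) 0
    rw [LieAlgebra.derivedSeriesOfIdeal_zero] at this
    exact this
  have hbrp : ∀ a b : L, ⁅a, b⁆ ∈ p := by
    intro a b
    have : ⁅a, b⁆ ∈ LieAlgebra.derivedSeries K L 1 := by
      rw [h1]
      exact LieSubmodule.lie_mem_lie (LieSubmodule.mem_top a) (LieSubmodule.mem_top b)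
    exact this
  obtain ⟨x, hx⟩ : ∃ x : L, f x ≠ 0 := by
    by_contra h
    push_neg at h
    exact hf0 (LinearMap.ext fun y => by simpa using h y)
  set g : L →ₗ[K] K := (f x)⁻¹ • f with hgdef
  have hg1 : g x = 1 := by
    simp [hgdef, inv_mul_cancel₀ hx]
  have hgbr : ∀ a b : L, g ⁅a, b⁆ = 0 := by
    intro a b
    simp [hgdef, hker _ (hbrp a b)]
  -- the centralizer (as a submodule) of the hyperplane ker g
  set N : Submodule K L :=
    { carrier := {w | ∀ m : L, g m = 0 → ⁅w, m⁆ = 0}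
      add_mem' := fun {a b} ha hb m hm => by rw [add_lie, ha m hm, hb m hm, add_zero]
      zero_mem' := fun m _ => zero_lie m
      smul_mem' := fun t w hw m hm => by rw [smul_lie, hw m hm, smul_zero] } with hNdef
  have hmemN : ∀ w : L, w ∈ N ↔ ∀ m : L, g m = 0 → ⁅w, m⁆ = 0 := fun w => Iff.rfl
  have hxN : ∀ w ∈ N, ⁅x, w⁆ ∈ N := by
    intro w hw m hm
    rw [lie_lie, hw m hm, hw ⁅x, m⁆ (hgbr x m), lie_zero, sub_zero]
  -- every element of N is hit by the restriction of ad x to N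
  have hsurj : ∀ c ∈ N, ∃ w ∈ N, ⁅x, w⁆ = c := by
    intro c hc
    have hlie : ∀ a : L, ⁅a, c⁆ = g a • ⁅x, c⁆ := by
      intro a
      have h1 : g (a - g a • x) = 0 := by
        simp [map_sub, map_smul, hg1, smul_eq_mul]
      have h2 : ⁅c, a - g a • x⁆ = 0 := hc (a - g a • x) h1
      rw [lie_sub, lie_smul, sub_eq_zero] at h2
      have := congrArg Neg.neg h2
      rw [← lie_skew c a, neg_neg] at this
      rw [this, ← lie_skew c x, smul_neg, neg_neg]
    -- y ↦ g y • c is a derivation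
    set D : LieDerivation K L L :=
      { toLinearMap := g.smulRight c
        leibniz' := by
          intro a b
          simp only [LinearMap.smulRight_apply]
          rw [hgbr a b, zero_smul, lie_smul, lie_smul, hlie a, hlie b,
            smul_comm (g b) (g a) ⁅x, c⁆]
          exact (sub_self _).symm } with hDdef
    obtain ⟨w, hw⟩ := hinner D
    have hDapp : ∀ y : L, g y • c = ⁅w, y⁆ := by
      intro y
      have : D y = (LieDerivation.ad K L w) y := by rw [hw]
      simpa [hDdef] using this
    refine ⟨-w, ?_, ?_⟩
    · intro m hm
      have := hDapp m
      rw [hm, zero_smul] at this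
      rw [neg_lie, ← this, neg_zero]
    · have hwx : ⁅w, x⁆ = c := by rw [← hDapp x, hg1, one_smul]
      rw [lie_neg, ← hwx]
      exact lie_skew w x
  -- ad x restricted to N
  set T : N →ₗ[K] N :=
    { toFun := fun w => ⟨⁅x, (w : L)⁆, hxN _ w.2⟩
      map_add' := fun a b => Subtype.ext (by simp)
      map_smul' := fun t a => Subtype.ext (by simp) } with hTdef
  have hTsurj : Function.Surjective T := by
    rintro ⟨c, hc⟩
    obtain ⟨w, hwN, hwc⟩ := hsurj c hc
    exact ⟨⟨w, hwN⟩, Subtype.ext hwc⟩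
  have hTinj : Function.Injective T :=
    (LinearMap.injective_iff_surjective).mpr hTsurj
  have hzN : z ∈ N := fun m _ => by rw [← lie_skew, hzc m, neg_zero]
  have : T ⟨z, hzN⟩ = T 0 := by
    refine Subtype.ext ?_
    simp [hTdef, hzc x]
  have := hTinj this
  exact hz0 (by simpa using congrArg Subtype.val this)
end

section
/- Every nonzero finite-dimensional nilpotent Lie algebra N over a field of arbitrary characteristic admits an outer derivation; that is, there exists a derivation D of N such that D ≠ ad_z for every z ∈ N. -/
/-- Every nonzero finite-dimensional nilpotent Lie algebra over a field (of arbitrary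
characteristic) admits an outer derivation. -/
theorem stmt_3 {K N : Type*} [Field K] [LieRing N] [LieAlgebra K N]
    [Module.Finite K N] [Nontrivial N] [LieRing.IsNilpotent N] :
    ∃ D : LieDerivation K N N, ∀ z : N, D ≠ LieDerivation.ad K N z := by
  classical
  -- the derived algebra is proper
  set C : LieSubmodule K N N := LieModule.lowerCentralSeries K N N 1 with hCdef
  have hCne : C ≠ ⊤ := by
    intro h
    have hall : ∀ n, LieModule.lowerCentralSeries K N N n = ⊤ := by
      intro n
      induction n with
      | zero => simp
      | succ n ih =>
        rw [LieModule.lowerCentralSeries_succ, ih]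
        rw [hCdef, LieModule.lowerCentralSeries_succ, LieModule.lowerCentralSeries_zero] at h
        exact h
    obtain ⟨k, hk⟩ := LieModule.IsNilpotent.nilpotent K N N
    rw [hall k] at hk
    exact top_ne_bot hk
  have hbr : ∀ x y : N, ⁅x, y⁆ ∈ C := by
    intro x y
    rw [hCdef, LieModule.lowerCentralSeries_succ, LieModule.lowerCentralSeries_zero]
    exact LieSubmodule.lie_mem_lie (LieSubmodule.mem_top x) (LieSubmodule.mem_top y)
  -- pick a ∉ C and a functional g with g a = 1 vanishing on C
  obtain ⟨a, ha⟩ : ∃ a : N, a ∉ C := by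
    by_contra h
    push_neg at h
    exact hCne (eq_top_iff.2 fun x _ => h x)
  obtain ⟨f, hfa, hfC⟩ := (C.toSubmodule).exists_dual_map_eq_bot_of_notMem ha inferInstance
  set g : Module.Dual K N := (f a)⁻¹ • f with hgdef
  have hga : g a = 1 := by simp [hgdef, inv_mul_cancel₀ hfa]
  have hg0 : ∀ x y : N, g ⁅x, y⁆ = 0 := by
    intro x y
    have : f ⁅x, y⁆ ∈ (C.toSubmodule).map f := Submodule.mem_map_of_mem (hbr x y)
    rw [hfC] at this
    rw [Submodule.mem_bot] at this
    simp [hgdef, this]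
  -- the centralizer of ker g
  set W : Submodule K N :=
    { carrier := {w | ∀ m, g m = 0 → ⁅w, m⁆ = 0}
      add_mem' := fun {w₁ w₂} h1 h2 m hm => by rw [add_lie, h1 m hm, h2 m hm, add_zero]
      zero_mem' := fun m _ => zero_lie m
      smul_mem' := fun c w h m hm => by rw [smul_lie, h m hm, smul_zero] } with hWdef
  have hWmem : ∀ w : N, w ∈ W ↔ ∀ m, g m = 0 → ⁅w, m⁆ = 0 := fun w => Iff.rfl
  -- W is nontrivial
  have : Nontrivial (LieAlgebra.center K N) :=
    LieAlgebra.non_trivial_center_of_isNilpotent (R := K) (L := N)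
  obtain ⟨z₀, hz₀⟩ := exists_ne (0 : LieAlgebra.center K N)
  have hz₀W : (z₀ : N) ∈ W := by
    intro m _
    rw [← lie_skew, z₀.2 m, neg_zero]
  have hz₀ne : (z₀ : N) ≠ 0 := fun h => hz₀ (Subtype.ext h)
  -- ad a is nilpotent and stabilizes W
  set T : Module.End K N := LieModule.toEnd K N N a with hTdef
  have hTapp : ∀ x : N, T x = ⁅a, x⁆ := fun x => LieModule.toEnd_apply_apply K N N a x
  have hTnil : IsNilpotent T := LieModule.isNilpotent_toEnd_of_isNilpotent K N N a
  have hstab : W.map T ≤ W := by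
    rintro _ ⟨w, hw, rfl⟩
    intro m hm
    rw [hTapp, lie_lie, hw m hm, hw ⁅a, m⁆ (hg0 a m)]
    simp
  have hlt : W.map T < W := by
    rcases lt_or_eq_of_le hstab with h | h
    · exact h
    · exfalso
      have hiter : ∀ n, W.map (T ^ n) = W := by
        intro n
        induction n with
        | zero => rw [pow_zero, Module.End.one_eq_id, Submodule.map_id]
        | succ n ih =>
          rw [pow_succ', Module.End.mul_eq_comp, Submodule.map_comp, ih, h]
      obtain ⟨k, hk⟩ := hTnil
      have hbot := hiter k
      rw [hk, Submodule.map_zero] at hbot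
      rw [← hbot] at hz₀W
      exact hz₀ne ((Submodule.mem_bot K).1 hz₀W)
  obtain ⟨v, hvW, hv⟩ := SetLike.exists_of_lt hlt
  -- key bracket identity for v
  have hkey : ∀ x : N, ⁅v, x⁆ = g x • ⁅v, a⁆ := by
    intro x
    have hx : g (x - g x • a) = 0 := by
      rw [map_sub, map_smul, hga, smul_eq_mul, mul_one, sub_self]
    have := hvW _ hx
    rw [lie_sub, lie_smul, sub_eq_zero] at this
    exact this
  -- the derivation D x = g x • v
  set D : LieDerivation K N N :=
    { toLinearMap := g.smulRight v
      leibniz' := fun x y => by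
        simp only [LinearMap.smulRight_apply]
        rw [hg0 x y, zero_smul, ← lie_skew x (g y • v), ← lie_skew y (g x • v),
          smul_lie, smul_lie, hkey x, hkey y, smul_comm (g x) (g y)]
        abel } with hDdef
  have hDapp : ∀ x : N, D x = g x • v := fun x => rfl
  refine ⟨D, fun z hz => ?_⟩
  have hadapp : ∀ x : N, (LieDerivation.ad K N z) x = ⁅z, x⁆ := fun x => by simp
  have hzW : z ∈ W := by
    intro m hm
    have := congrArg (fun E : LieDerivation K N N => E m) hz
    simp only [hDapp] at this
    rw [hm, zero_smul, hadapp] at this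
    exact this.symm
  have hva : v = ⁅z, a⁆ := by
    have := congrArg (fun E : LieDerivation K N N => E a) hz
    simp only [hDapp] at this
    rw [hga, one_smul, hadapp] at this
    exact this
  apply hv
  have hmem : ⁅a, z⁆ ∈ W.map T := by
    rw [← hTapp]
    exact Submodule.mem_map_of_mem hzW
  have hveq : v = -⁅a, z⁆ := by rw [hva, ← lie_skew]
  rw [hveq]
  exact (W.map T).neg_mem hmem
end

section
/- Let L be a finite-dimensional Lie algebra over ℂ and let D be a derivation of L. Suppose D = S + T is the Jordan–Chevalley decomposition of D as a linear endomorphism of L, i.e., S is a semisimple endomorphism, T is a nilpotent endomorphism, and S and T commute. Then both S and T are derivations of L. -/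
/-- Key binomial-free lemma: brackets of generalized eigenvectors of a derivation `D`
land in the generalized eigenspace of the sum of the eigenvalues. -/
lemma key_lie_gen_eig {L : Type*} [LieRing L] [LieAlgebra ℂ L]
    (D : Module.End ℂ L)
    (hD : ∀ x y : L, D ⁅x, y⁆ = ⁅D x, y⁆ + ⁅x, D y⁆) (a b : ℂ) :
    ∀ n p q : ℕ, p + q = n → ∀ x y : L,
      ((D - a • 1) ^ p) x = 0 → ((D - b • 1) ^ q) y = 0 →
      ((D - (a + b) • 1) ^ n) ⁅x, y⁆ = 0 := by
  intro n
  induction n with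
  | zero =>
    intro p q hpq x y hx hy
    obtain ⟨rfl, rfl⟩ : p = 0 ∧ q = 0 := by omega
    simp only [pow_zero, Module.End.one_apply] at hx
    simp [hx]
  | succ n ih =>
    intro p q hpq x y hx hy
    rcases p with _ | p
    · simp only [pow_zero, Module.End.one_apply] at hx
      simp [hx]
    rcases q with _ | q
    · simp only [pow_zero, Module.End.one_apply] at hy
      simp [hy]
    have hstep : (D - (a + b) • 1) ⁅x, y⁆ = ⁅(D - a • 1) x, y⁆ + ⁅x, (D - b • 1) y⁆ := by
      simp only [LinearMap.sub_apply, LinearMap.smul_apply, Module.End.one_apply,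
        LinearMap.add_apply, sub_lie, lie_sub, smul_lie, lie_smul, hD x y, add_smul]
      abel
    rw [pow_succ, Module.End.mul_apply, hstep, map_add]
    have h1 : ((D - (a + b) • 1) ^ n) ⁅(D - a • 1) x, y⁆ = 0 := by
      refine ih p (q + 1) (by omega) _ _ ?_ hy
      rw [← Module.End.mul_apply, ← pow_succ]
      exact hx
    have h2 : ((D - (a + b) • 1) ^ n) ⁅x, (D - b • 1) y⁆ = 0 := by
      refine ih (p + 1) q (by omega) _ _ hx ?_
      rw [← Module.End.mul_apply, ← pow_succ]
      exact hy
    rw [h1, h2, add_zero]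

/-- If `D = S + T` is the Jordan–Chevalley decomposition of a derivation `D` of a
finite-dimensional complex Lie algebra (with `S` semisimple, `T` nilpotent, `S` and `T`
commuting), then both `S` and `T` are derivations. -/
theorem stmt_4 {L : Type*} [LieRing L] [LieAlgebra ℂ L] [Module.Finite ℂ L]
    (D S T : Module.End ℂ L)
    (hD : ∀ x y : L, D ⁅x, y⁆ = ⁅D x, y⁆ + ⁅x, D y⁆)
    (hS : S.IsSemisimple) (hT : IsNilpotent T) (hST : Commute S T)
    (hsum : D = S + T) :
    (∀ x y : L, S ⁅x, y⁆ = ⁅S x, y⁆ + ⁅x, S y⁆) ∧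
    (∀ x y : L, T ⁅x, y⁆ = ⁅T x, y⁆ + ⁅x, T y⁆) := by
  have hDS : Commute D S := by
    rw [hsum]; exact (Commute.refl S).add_left hST.symm
  have hnil : IsNilpotent (D - S) := by
    rw [hsum, add_sub_cancel_left]; exact hT
  -- `S` acts as `μ •` on each maximal generalized eigenspace of `D`.
  have hSmul : ∀ (μ : ℂ) (m : L), m ∈ D.maxGenEigenspace μ → S m = μ • m := by
    intro μ m hm
    exact Module.End.apply_eq_of_mem_of_comm_of_isFinitelySemisimple_of_isNil hm hDS
      hS.isFinitelySemisimple hnil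
  have hSder : ∀ x y : L, S ⁅x, y⁆ = ⁅S x, y⁆ + ⁅x, S y⁆ := by
    have hkey : ∀ (a b : ℂ) (x y : L), x ∈ D.maxGenEigenspace a → y ∈ D.maxGenEigenspace b →
        S ⁅x, y⁆ = ⁅S x, y⁆ + ⁅x, S y⁆ := by
      intro a b x y hx hy
      rw [Module.End.mem_maxGenEigenspace] at hx hy
      obtain ⟨p, hp⟩ := hx
      obtain ⟨q, hq⟩ := hy
      have hxy : ⁅x, y⁆ ∈ D.maxGenEigenspace (a + b) := by
        rw [Module.End.mem_maxGenEigenspace]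
        exact ⟨p + q, key_lie_gen_eig D hD a b (p + q) p q rfl x y hp hq⟩
      have hx' : x ∈ D.maxGenEigenspace a := (Module.End.mem_maxGenEigenspace D a x).mpr ⟨p, hp⟩
      have hy' : y ∈ D.maxGenEigenspace b := (Module.End.mem_maxGenEigenspace D b y).mpr ⟨q, hq⟩
      rw [hSmul (a + b) _ hxy, hSmul a x hx', hSmul b y hy', smul_lie, lie_smul, add_smul]
    have htop : ⨆ μ : ℂ, D.maxGenEigenspace μ = ⊤ := Module.End.iSup_maxGenEigenspace_eq_top D
    intro x y
    have hx : x ∈ ⨆ μ : ℂ, D.maxGenEigenspace μ := htop ▸ Submodule.mem_top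
    have hy : y ∈ ⨆ μ : ℂ, D.maxGenEigenspace μ := htop ▸ Submodule.mem_top
    induction hx using Submodule.iSup_induction' with
    | mem a x hx =>
      induction hy using Submodule.iSup_induction' with
      | mem b y hy => exact hkey a b x y hx hy
      | zero => simp
      | add _ _ _ _ h h' => simp only [lie_add, map_add, h, h']; abel
    | zero => simp
    | add _ _ _ _ h h' => simp only [add_lie, map_add, h, h']; abel
  refine ⟨hSder, fun x y => ?_⟩
  have hT' : T = D - S := by rw [hsum, add_sub_cancel_left]
  rw [hT']
  simp only [LinearMap.sub_apply, sub_lie, lie_sub, hD x y, hSder x y]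
  abel
end
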